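/- arXiv:1712.09215 — 2 statements merged into one kernel-verified Lean document; each statement's English description precedes it below -/
import Mathlib

section
/- (Rank formula for finitely generated modules over k[X]; the final reduction in the proof of Theorem B.3.) Let k be a field and let M be a finitely generated module over the polynomial ring k[X]. Let t : M → M denote the k-linear map given by multiplication by X. Then the k-vector spaces M/t(M) and ker(t) are finite dimensional, and dim_{k(X)} (k(X) ⊗_{k[X]} M) = dim_k (M / t(M)) − dim_k (ker t), where k(X) is the field of rational functions (the fraction field of k[X]). -/
universe u v

open Polynomial Module LinearMap DirectSum

set_option synthInstance.maxHeartbeats 1000000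
set_option maxHeartbeats 1000000

section Aux
variable {k : Type*} [Field k]

local notation "K" => FractionRing (Polynomial k)

variable (k) in
noncomputable def tmapX (N : Type*) [AddCommGroup N] [Module k N] [Module (Polynomial k) N]
    [IsScalarTower k (Polynomial k) N] : N →ₗ[k] N :=
  (LinearMap.lsmul (Polynomial k) N Polynomial.X).restrictScalars k

@[simp] lemma tmapX_apply (N : Type*) [AddCommGroup N] [Module k N] [Module (Polynomial k) N]
    [IsScalarTower k (Polynomial k) N] (x : N) : tmapX k N x = (Polynomial.X : (Polynomial k)) • x := rfl

variable (k) in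
def GoodX (N : Type*) [AddCommGroup N] [Module k N] [Module (Polynomial k) N] [IsScalarTower k (Polynomial k) N] : Prop :=
  FiniteDimensional k (ker (tmapX k N)) ∧
  FiniteDimensional k (N ⧸ range (tmapX k N)) ∧
  ((finrank K (TensorProduct (Polynomial k) K N) : ℤ)
    = (finrank k (N ⧸ range (tmapX k N)) : ℤ) - (finrank k (ker (tmapX k N)) : ℤ))

section Transport
variable {N₁ N₂ : Type*} [AddCommGroup N₁] [Module k N₁] [Module (Polynomial k) N₁]
  [IsScalarTower k (Polynomial k) N₁]
  [AddCommGroup N₂] [Module k N₂] [Module (Polynomial k) N₂]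
  [IsScalarTower k (Polynomial k) N₂]

lemma map_ker_tmapX (e : N₁ ≃ₗ[(Polynomial k)] N₂) :
    (ker (tmapX k N₁)).map ((e.restrictScalars k : N₁ →ₗ[k] N₂)) = ker (tmapX k N₂) := by
  ext y
  simp only [Submodule.mem_map, mem_ker, tmapX_apply, LinearEquiv.coe_coe,
    LinearEquiv.restrictScalars_apply]
  constructor
  · rintro ⟨x, hx, rfl⟩
    rw [← map_smul, hx, map_zero]
  · intro hy
    refine ⟨e.symm y, ?_, e.apply_symm_apply y⟩
    rw [← map_smul, hy, map_zero]

lemma map_range_tmapX (e : N₁ ≃ₗ[(Polynomial k)] N₂) :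
    (range (tmapX k N₁)).map ((e.restrictScalars k : N₁ →ₗ[k] N₂)) = range (tmapX k N₂) := by
  ext y
  simp only [Submodule.mem_map, mem_range, tmapX_apply, LinearEquiv.coe_coe,
    LinearEquiv.restrictScalars_apply]
  constructor
  · rintro ⟨x, ⟨z, rfl⟩, rfl⟩
    exact ⟨e z, (map_smul e _ _).symm⟩
  · rintro ⟨z, rfl⟩
    exact ⟨Polynomial.X • e.symm z, ⟨e.symm z, rfl⟩, by rw [map_smul, e.apply_symm_apply]⟩

noncomputable def kerEquivX (e : N₁ ≃ₗ[(Polynomial k)] N₂) : ker (tmapX k N₁) ≃ₗ[k] ker (tmapX k N₂) :=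
  ((e.restrictScalars k).submoduleMap (ker (tmapX k N₁))).trans
    (LinearEquiv.ofEq _ _ (map_ker_tmapX e))

noncomputable def cokerEquivX (e : N₁ ≃ₗ[(Polynomial k)] N₂) :
    (N₁ ⧸ range (tmapX k N₁)) ≃ₗ[k] (N₂ ⧸ range (tmapX k N₂)) :=
  Submodule.Quotient.equiv _ _ (e.restrictScalars k) (map_range_tmapX e)

lemma GoodX.of_equiv (e : N₁ ≃ₗ[(Polynomial k)] N₂) (h : GoodX k N₁) : GoodX k N₂ := by
  obtain ⟨h1, h2, h3⟩ := h
  refine ⟨(kerEquivX e).finiteDimensional, (cokerEquivX e).finiteDimensional, ?_⟩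
  rw [← (e.baseChange (A := K) ..).finrank_eq, ← (kerEquivX e).finrank_eq,
    ← (cokerEquivX e).finrank_eq]
  exact h3

end Transport

section Prod
variable {P Q : Type*} [AddCommGroup P] [Module k P] [Module (Polynomial k) P]
  [IsScalarTower k (Polynomial k) P]
  [AddCommGroup Q] [Module k Q] [Module (Polynomial k) Q]
  [IsScalarTower k (Polynomial k) Q]

lemma tmapX_prod : tmapX k (P × Q) = (tmapX k P).prodMap (tmapX k Q) := rfl

/-- a product of submodules is equivalent to the product of the two submodules -/
def subProdEquiv (p : Submodule k P) (q : Submodule k Q) :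
    (p.prod q : Submodule k (P × Q)) ≃ₗ[k] p × q where
  toFun x := (⟨x.1.1, x.2.1⟩, ⟨x.1.2, x.2.2⟩)
  invFun y := ⟨(y.1.1, y.2.1), ⟨y.1.2, y.2.2⟩⟩
  map_add' x y := rfl
  map_smul' c x := rfl
  left_inv x := rfl
  right_inv y := rfl

noncomputable def kerProdEquiv :
    ker (tmapX k (P × Q)) ≃ₗ[k] ker (tmapX k P) × ker (tmapX k Q) :=
  (LinearEquiv.ofEq _ _ (by rw [tmapX_prod, ker_prodMap])).trans
    (subProdEquiv (ker (tmapX k P)) (ker (tmapX k Q)))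

noncomputable def cokerProdEquiv :
    ((P × Q) ⧸ range (tmapX k (P × Q))) ≃ₗ[k]
      (P ⧸ range (tmapX k P)) × (Q ⧸ range (tmapX k Q)) := by
  refine (Submodule.quotEquivOfEq _ _ ?_).trans
    ((LinearMap.prodMap (range (tmapX k P)).mkQ (range (tmapX k Q)).mkQ).quotKerEquivOfSurjective
      ?_)
  · rw [tmapX_prod, ker_prodMap, Submodule.ker_mkQ, Submodule.ker_mkQ]
    ext ⟨y1, y2⟩
    simp only [mem_range, prodMap_apply, Prod.mk.injEq, Submodule.mem_prod, Prod.exists]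
    constructor
    · rintro ⟨a, b, h1, h2⟩
      exact ⟨⟨a, h1⟩, ⟨b, h2⟩⟩
    · rintro ⟨⟨a, h1⟩, ⟨b, h2⟩⟩
      exact ⟨a, b, h1, h2⟩
  · intro y
    obtain ⟨a, ha⟩ := (range (tmapX k P)).mkQ_surjective y.1
    obtain ⟨b, hb⟩ := (range (tmapX k Q)).mkQ_surjective y.2
    exact ⟨(a, b), Prod.ext ha hb⟩

noncomputable def tensorProdFwd :
    TensorProduct (Polynomial k) K (P × Q) →ₗ[K]
      TensorProduct (Polynomial k) K P × TensorProduct (Polynomial k) K Q :=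
  LinearMap.prod
    (TensorProduct.AlgebraTensorModule.map
      (LinearMap.id : K →ₗ[K] K) (LinearMap.fst (Polynomial k) P Q))
    (TensorProduct.AlgebraTensorModule.map
      (LinearMap.id : K →ₗ[K] K) (LinearMap.snd (Polynomial k) P Q))

noncomputable def tensorProdEquiv :
    TensorProduct (Polynomial k) K (P × Q) ≃ₗ[K]
      TensorProduct (Polynomial k) K P × TensorProduct (Polynomial k) K Q := by
  refine LinearEquiv.ofBijective (tensorProdFwd (P := P) (Q := Q)) ?_
  have key : ∀ z : TensorProduct (Polynomial k) (FractionRing (Polynomial k)) (P × Q),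
      tensorProdFwd (P := P) (Q := Q) z
        = TensorProduct.prodRight (Polynomial k) K K P Q z := by
    intro z
    induction z using TensorProduct.induction_on with
    | zero => rw [map_zero, map_zero]
    | tmul x y => rfl
    | add a b ha hb => simp only [map_add, ha, hb]
  rw [show ⇑(tensorProdFwd (P := P) (Q := Q))
      = ⇑(TensorProduct.prodRight (Polynomial k) K K P Q) from funext key]
  exact (TensorProduct.prodRight (Polynomial k) K K P Q).bijective

lemma GoodX.prod [Module.Finite (Polynomial k) P] [Module.Finite (Polynomial k) Q]
    (hP : GoodX k P) (hQ : GoodX k Q) : GoodX k (P × Q) := by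
  obtain ⟨hP1, hP2, hP3⟩ := hP
  obtain ⟨hQ1, hQ2, hQ3⟩ := hQ
  have f1 : FiniteDimensional k (ker (tmapX k (P × Q))) := (kerProdEquiv).symm.finiteDimensional
  have f2 : FiniteDimensional k ((P × Q) ⧸ range (tmapX k (P × Q))) :=
    (cokerProdEquiv).symm.finiteDimensional
  refine ⟨f1, f2, ?_⟩
  have e1 : finrank (FractionRing (Polynomial k)) (TensorProduct (Polynomial k)
        (FractionRing (Polynomial k)) (P × Q))
      = finrank (FractionRing (Polynomial k))
          (TensorProduct (Polynomial k) (FractionRing (Polynomial k)) P)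
        + finrank (FractionRing (Polynomial k))
          (TensorProduct (Polynomial k) (FractionRing (Polynomial k)) Q) := by
    rw [(tensorProdEquiv (P := P) (Q := Q)).finrank_eq,
      Module.finrank_prod (R := FractionRing (Polynomial k))
        (M := TensorProduct (Polynomial k) (FractionRing (Polynomial k)) P)
        (M' := TensorProduct (Polynomial k) (FractionRing (Polynomial k)) Q)]
  have e2 : finrank k (ker (tmapX k (P × Q)))
      = finrank k (ker (tmapX k P)) + finrank k (ker (tmapX k Q)) := by
    rw [(kerProdEquiv (P := P) (Q := Q)).finrank_eq, Module.finrank_prod (R := k)]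
  have e3 : finrank k ((P × Q) ⧸ range (tmapX k (P × Q)))
      = finrank k (P ⧸ range (tmapX k P)) + finrank k (Q ⧸ range (tmapX k Q)) := by
    rw [(cokerProdEquiv (P := P) (Q := Q)).finrank_eq, Module.finrank_prod (R := k)]
  rw [e1, e2, e3]
  push_cast
  omega

end Prod

section Base

lemma ker_tmapX_self : ker (tmapX k (Polynomial k)) = ⊥ := by
  ext x
  simp only [mem_ker, tmapX_apply, Submodule.mem_bot, smul_eq_mul]
  constructor
  · intro h
    rcases mul_eq_zero.mp h with h | h
    · exact absurd h Polynomial.X_ne_zero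
    · exact h
  · rintro rfl; exact mul_zero _

lemma range_tmapX_self :
    range (tmapX k (Polynomial k))
      = (Ideal.span {(Polynomial.X : Polynomial k)}).restrictScalars k := by
  ext x
  simp only [mem_range, tmapX_apply, smul_eq_mul, Submodule.restrictScalars_mem,
    Ideal.mem_span_singleton]
  constructor
  · rintro ⟨y, rfl⟩; exact Dvd.intro y rfl
  · rintro ⟨y, rfl⟩; exact ⟨y, rfl⟩

noncomputable def cokerSelfEquiv : (Polynomial k ⧸ range (tmapX k (Polynomial k))) ≃ₗ[k] k := by
  refine (Submodule.quotEquivOfEq _ _ ?_).trans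
    ((Polynomial.lcoeff k 0).quotKerEquivOfSurjective ?_)
  · ext f
    simp only [mem_range, tmapX_apply, smul_eq_mul, mem_ker, Polynomial.lcoeff_apply]
    rw [← Polynomial.X_dvd_iff]
    constructor
    · rintro ⟨y, rfl⟩; exact Dvd.intro y rfl
    · rintro ⟨y, rfl⟩; exact ⟨y, rfl⟩
  · intro a
    exact ⟨Polynomial.C a, Polynomial.coeff_C_zero⟩

lemma good_self : GoodX k (Polynomial k) := by
  have h1 : FiniteDimensional k (ker (tmapX k (Polynomial k))) := by
    rw [ker_tmapX_self]; infer_instance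
  have h2 : FiniteDimensional k (Polynomial k ⧸ range (tmapX k (Polynomial k))) :=
    (cokerSelfEquiv (k := k)).symm.finiteDimensional
  refine ⟨h1, h2, ?_⟩
  have e1 : finrank (FractionRing (Polynomial k))
      (TensorProduct (Polynomial k) (FractionRing (Polynomial k)) (Polynomial k)) = 1 := by
    rw [(TensorProduct.AlgebraTensorModule.rid (Polynomial k) (FractionRing (Polynomial k))
      (FractionRing (Polynomial k))).finrank_eq, finrank_self]
  have e2 : finrank k (Polynomial k ⧸ range (tmapX k (Polynomial k))) = 1 := by
    rw [(cokerSelfEquiv (k := k)).finrank_eq, finrank_self]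
  have e3 : finrank k (ker (tmapX k (Polynomial k))) = 0 := by
    rw [ker_tmapX_self]; exact finrank_bot k (Polynomial k)
  rw [e1, e2, e3]
  norm_num

variable {N : Type*} [AddCommGroup N] [Module k N] [Module (Polynomial k) N]
  [IsScalarTower k (Polynomial k) N]

lemma good_subsingleton [Subsingleton N] : GoodX k N := by
  haveI : Module.Finite k N := Module.Finite.of_surjective (0 : k →ₗ[k] N)
    (fun x => ⟨0, Subsingleton.elim _ _⟩)
  haveI : Subsingleton (N ⧸ range (tmapX k N)) :=
    (Submodule.Quotient.mk_surjective _).subsingleton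
  haveI : Subsingleton (TensorProduct (Polynomial k) (FractionRing (Polynomial k)) N) := by
    refine subsingleton_of_forall_eq 0 fun z => ?_
    induction z using TensorProduct.induction_on with
    | zero => rfl
    | tmul x y => rw [Subsingleton.elim y 0, TensorProduct.tmul_zero]
    | add a b ha hb => rw [ha, hb, add_zero]
  refine ⟨inferInstance, inferInstance, ?_⟩
  rw [finrank_zero_of_subsingleton, finrank_zero_of_subsingleton,
    finrank_zero_of_subsingleton]
  norm_num

lemma good_torsion [Module.Finite (Polynomial k) N] (q : Polynomial k) (hq : q ≠ 0)
    (htor : ∀ x : N, q • x = 0) : GoodX k N := by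
  have hT : Module.IsTorsionBySet (Polynomial k) N (Ideal.span {q} : Ideal (Polynomial k)) :=
    (Module.isTorsionBySet_span_singleton_iff q).mpr htor
  letI : Module (Polynomial k ⧸ Ideal.span {q}) N := hT.module
  haveI : IsScalarTower (Polynomial k) (Polynomial k ⧸ Ideal.span {q}) N :=
    hT.isScalarTower
  haveI : IsScalarTower k (Polynomial k ⧸ Ideal.span {q}) N := hT.isScalarTower
  haveI : Module.Finite (Polynomial k ⧸ Ideal.span {q}) N :=
    Module.Finite.of_restrictScalars_finite (Polynomial k) _ _
  haveI : FiniteDimensional k (Polynomial k ⧸ Ideal.span {q}) :=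
    (AdjoinRoot.powerBasis hq).finite
  haveI : FiniteDimensional k N := Module.Finite.trans (Polynomial k ⧸ Ideal.span {q}) N
  haveI : Subsingleton (TensorProduct (Polynomial k) (FractionRing (Polynomial k)) N) := by
    have hu : IsUnit (algebraMap (Polynomial k) (FractionRing (Polynomial k)) q) :=
      IsLocalization.map_units (FractionRing (Polynomial k))
        ⟨q, mem_nonZeroDivisors_of_ne_zero hq⟩
    refine subsingleton_of_forall_eq 0 fun z => ?_
    induction z using TensorProduct.induction_on with
    | zero => rfl
    | tmul x y =>
        have hx : x = q • ((↑hu.unit⁻¹ : FractionRing (Polynomial k)) * x) := by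
          rw [Algebra.smul_def, ← mul_assoc, hu.mul_val_inv, one_mul]
        rw [hx, TensorProduct.smul_tmul, htor y, TensorProduct.tmul_zero]
    | add a b ha hb => rw [ha, hb, add_zero]
  refine ⟨inferInstance, inferInstance, ?_⟩
  have h1 := Submodule.finrank_quotient_add_finrank (range (tmapX k N))
  have h2 := LinearMap.finrank_range_add_finrank_ker (tmapX k N)
  rw [finrank_zero_of_subsingleton]
  push_cast
  omega

end Base

section Pi

/-- decomposing a pi type over `Fin (n+1)` -/
def piSuccEquiv (A : Type*) [CommRing A] (n : ℕ) :
    (Fin (n + 1) → A) ≃ₗ[A] A × (Fin n → A) where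
  toFun f := (f 0, fun i => f i.succ)
  invFun p := Fin.cons p.1 p.2
  map_add' f g := rfl
  map_smul' c f := rfl
  left_inv f := funext fun i => Fin.cases rfl (fun j => rfl) i
  right_inv p := by
    refine Prod.ext rfl (funext fun i => ?_)
    simp [Fin.cons_succ]

lemma good_pi (n : ℕ) : GoodX k (Fin n → Polynomial k) := by
  induction n with
  | zero => exact good_subsingleton
  | succ n ih =>
      exact (GoodX.prod good_self ih).of_equiv (piSuccEquiv (Polynomial k) n).symm

lemma good_finsupp (n : ℕ) : GoodX k (Fin n →₀ Polynomial k) :=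
  (good_pi n).of_equiv (Finsupp.linearEquivFunOnFinite (Polynomial k) (Polynomial k) (Fin n)).symm

end Pi

section Main
variable {k : Type u} [Field k]

lemma goodX_of_finite (M : Type v) [AddCommGroup M]
    [Module k M] [Module (Polynomial k) M] [IsScalarTower k (Polynomial k) M]
    [Module.Finite (Polynomial k) M] : GoodX k M := by
  -- pass to a universe-lifted copy so that the structure theorem applies
  haveI : Module.Finite (Polynomial k) (ULift.{u} M) :=
    Module.Finite.equiv (ULift.moduleEquiv (R := Polynomial k) (M := M)).symm
  have main : GoodX k (ULift.{u} M) := by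
    obtain ⟨n, ι, fι, p, hp, e, ⟨eqv⟩⟩ :=
      Module.equiv_free_prod_directSum (R := Polynomial k) (M := ULift.{u} M)
    haveI := fι
    haveI : Module.Finite (Polynomial k)
        (⨁ i : ι, (Polynomial k ⧸ ((Polynomial k) ∙ (p i ^ e i)))) :=
      Module.Finite.equiv
        (DirectSum.linearEquivFunOnFintype (Polynomial k) ι
          (fun i => Polynomial k ⧸ ((Polynomial k) ∙ (p i ^ e i)))).symm
    have hq : (∏ i : ι, p i ^ e i) ≠ 0 :=
      Finset.prod_ne_zero_iff.mpr fun i _ => pow_ne_zero _ (hp i).ne_zero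
    have htor : ∀ x : (⨁ i : ι, (Polynomial k ⧸ ((Polynomial k) ∙ (p i ^ e i)))),
        (∏ i : ι, p i ^ e i) • x = 0 := by
      intro x
      haveI := Classical.decEq ι
      refine DFinsupp.ext fun i => ?_
      rw [DFinsupp.smul_apply, DFinsupp.zero_apply]
      obtain ⟨r, hr⟩ := Submodule.Quotient.mk_surjective _ (x i)
      rw [← hr, ← Submodule.Quotient.mk_smul, Submodule.Quotient.mk_eq_zero]
      rw [Submodule.mem_span_singleton]
      refine ⟨(∏ j ∈ Finset.univ.erase i, p j ^ e j) * r, ?_⟩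
      rw [smul_eq_mul, smul_eq_mul, mul_right_comm,
        Finset.prod_erase_mul Finset.univ (fun j => p j ^ e j) (Finset.mem_univ i)]
    have goodT : GoodX k (⨁ i : ι, (Polynomial k ⧸ ((Polynomial k) ∙ (p i ^ e i)))) :=
      good_torsion _ hq htor
    haveI : Module.Finite (Polynomial k) (Fin n →₀ Polynomial k) :=
      Module.Finite.equiv
        (Finsupp.linearEquivFunOnFinite (Polynomial k) (Polynomial k) (Fin n)).symm
    exact ((good_finsupp n).prod goodT).of_equiv eqv.symm
  exact main.of_equiv (ULift.moduleEquiv (R := Polynomial k) (M := M))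

end Main
end Aux

/-- Rank formula for finitely generated modules over `k[X]` (the final reduction in the
proof of Theorem B.3): for a finitely generated `k[X]`-module `M` with `t : M → M`
multiplication by `X`, the `k`-vector spaces `ker t` and `M/t(M)` are finite
dimensional and `dim_{k(X)} (k(X) ⊗_{k[X]} M) = dim_k (M/t(M)) − dim_k (ker t)`. -/
theorem stmt_18 {k : Type*} [Field k] (M : Type*) [AddCommGroup M]
    [Module k M] [Module (Polynomial k) M] [IsScalarTower k (Polynomial k) M]
    [Module.Finite (Polynomial k) M] :
    FiniteDimensional k
        (LinearMap.ker ((LinearMap.lsmul (Polynomial k) M Polynomial.X).restrictScalars k)) ∧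
      FiniteDimensional k
        (M ⧸ LinearMap.range
          ((LinearMap.lsmul (Polynomial k) M Polynomial.X).restrictScalars k)) ∧
      (Module.finrank (FractionRing (Polynomial k))
          (TensorProduct (Polynomial k) (FractionRing (Polynomial k)) M) : ℤ)
        = (Module.finrank k
            (M ⧸ LinearMap.range
              ((LinearMap.lsmul (Polynomial k) M Polynomial.X).restrictScalars k)) : ℤ)
          - (Module.finrank k
              (LinearMap.ker
                ((LinearMap.lsmul (Polynomial k) M Polynomial.X).restrictScalars k)) : ℤ) :=
  goodX_of_finite M
end

section
/- (Surjectivity of D on its power-torsion subspace; key step in Appendix B.) Let V be a vector space over a field of characteristic zero, and let X, D : V → V be linear maps satisfying the Weyl commutation relation D∘X − X∘D = id_V. Let N := { v ∈ V : D^k v = 0 for some k ∈ ℕ }. Then N is stable under both X and D, and the restriction of D to N is surjective onto N, i.e. D(N) = N. -/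
private lemma comm_pow {F V : Type*} [Field F] [CharZero F] [AddCommGroup V] [Module F V]
    (X D : Module.End F V) (h : D * X - X * D = 1) (k : ℕ) :
    D ^ (k + 1) * X = X * D ^ (k + 1) + ((k : F) + 1) • D ^ k := by
  have hDX : D * X = X * D + 1 := by
    rw [sub_eq_iff_eq_add] at h; rw [h, add_comm]
  induction k with
  | zero =>
    simpa using hDX
  | succ k ih =>
    have h1 : D ^ (k + 2) * X = D * (D ^ (k + 1) * X) := by
      rw [pow_succ' D (k + 1), mul_assoc]
    rw [h1, ih, mul_add, mul_smul_comm, ← mul_assoc, hDX, add_mul, one_mul,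
      mul_assoc, ← pow_succ', ← pow_succ']
    push_cast
    module

private lemma pow_succ_apply {F V : Type*} [Field F] [AddCommGroup V] [Module F V]
    (D : Module.End F V) (k : ℕ) (v : V) : (D ^ (k + 1)) v = D ((D ^ k) v) := by
  rw [pow_succ' D k, Module.End.mul_apply]

private lemma surj_aux {F V : Type*} [Field F] [CharZero F] [AddCommGroup V] [Module F V]
    (X D : Module.End F V) (h : D * X - X * D = 1) :
    ∀ k : ℕ, ∀ v : V, (D ^ k) v = 0 → ∃ u : V, (D ^ k) u = 0 ∧ D (X u) = v := by
  intro k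
  induction k with
  | zero =>
    intro v hv
    simp only [pow_zero, Module.End.one_apply] at hv
    exact ⟨0, by simp, by simp [hv]⟩
  | succ k ih =>
    intro v hv
    set c : F := ((k : F) + 1)⁻¹ with hc
    have hne : ((k : F) + 1) ≠ 0 := Nat.cast_add_one_ne_zero k
    set w : V := v - c • ((D * X) v) with hw
    have hwk : (D ^ k) w = 0 := by
      have key : (D ^ (k + 1) * X) v = X ((D ^ (k + 1)) v) + ((k : F) + 1) • (D ^ k) v := by
        rw [comm_pow X D h k]; simp
      have h1 : (D ^ k) ((D * X) v) = (D ^ (k + 1) * X) v := by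
        rw [Module.End.mul_apply, Module.End.mul_apply, ← Module.End.mul_apply (D ^ k) D,
          ← pow_succ]
      have h2 : ((k : F) + 1) • (D ^ k) w = 0 := by
        rw [hw, map_sub, map_smul, smul_sub, h1, key, hv, map_zero, zero_add,
          smul_comm ((k : F) + 1) c, hc, smul_smul, inv_mul_cancel₀ hne, one_smul, sub_self]
      exact (smul_eq_zero.mp h2).resolve_left hne
    obtain ⟨u', hu'k, hu'⟩ := ih w hwk
    refine ⟨u' + c • v, ?_, ?_⟩
    · rw [map_add, map_smul, hv, smul_zero, add_zero, pow_succ_apply, hu'k, map_zero]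
    · rw [map_add, map_add, map_smul, map_smul, hu', hw]
      have h3 : D (X v) = (D * X) v := rfl
      rw [h3]
      abel
  
/-- Surjectivity of `D` on its power-torsion subspace (key step in Appendix B):
if `X, D` are linear endomorphisms of a vector space `V` over a field of
characteristic zero with `D∘X − X∘D = id`, then
`N = {v | ∃ k, D^k v = 0}` is stable under `X` and `D`, and `D(N) = N`. -/
theorem stmt_19 {F V : Type*} [Field F] [CharZero F] [AddCommGroup V] [Module F V]
    (X D : Module.End F V) (h : D * X - X * D = 1) :
    (∀ v ∈ {v : V | ∃ k : ℕ, (D ^ k) v = 0}, X v ∈ {v : V | ∃ k : ℕ, (D ^ k) v = 0}) ∧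
      (∀ v ∈ {v : V | ∃ k : ℕ, (D ^ k) v = 0}, D v ∈ {v : V | ∃ k : ℕ, (D ^ k) v = 0}) ∧
      D '' {v : V | ∃ k : ℕ, (D ^ k) v = 0} = {v : V | ∃ k : ℕ, (D ^ k) v = 0} := by
  have hX : ∀ (k : ℕ) (u : V), (D ^ k) u = 0 → (D ^ (k + 1)) (X u) = 0 := by
    intro k u hk
    have h1 : (D ^ (k + 1)) (X u) = (D ^ (k + 1) * X) u := rfl
    have hk1 : (D ^ (k + 1)) u = 0 := by rw [pow_succ_apply, hk, map_zero]
    rw [h1, comm_pow X D h k]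
    simp [hk, hk1]
  have hD : ∀ (k : ℕ) (u : V), (D ^ k) u = 0 → (D ^ k) (D u) = 0 := by
    intro k u hk
    have : (D ^ k) (D u) = (D ^ (k + 1)) u := by
      rw [pow_succ, Module.End.mul_apply]
    rw [this, pow_succ_apply, hk, map_zero]
  refine ⟨?_, ?_, ?_⟩
  · rintro v ⟨k, hk⟩
    exact ⟨k + 1, hX k v hk⟩
  · rintro v ⟨k, hk⟩
    exact ⟨k, hD k v hk⟩
  · ext v
    constructor
    · rintro ⟨u, ⟨k, hk⟩, rfl⟩
      exact ⟨k, hD k u hk⟩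
    · rintro ⟨k, hk⟩
      obtain ⟨u, huk, hu⟩ := surj_aux X D h k v hk
      exact ⟨X u, ⟨k + 1, hX k u huk⟩, hu⟩
end
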